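/- Let 𝔤 be a Lie algebra that is a direct sum of ideals 𝔤 = ⊕_{l=1}^m 𝔰_l with each 𝔰_l simple, and let W ⊆ 𝔤 be a subspace with 𝔤 = W + [W,W], W ∩ [W,W] = 0, and such that the projections P_l(W) satisfy P_l(W) ∩ [P_l(W),P_l(W)] = 0 for all l. Then W = ⊕_{l=1}^m W_l where W_l = P_l(W) ⊆ 𝔰_l, each W_l is nonzero and W_l ≠ 𝔰_l, assuming additionally that W is a Lie triple system and the inner product on 𝔤 makes the 𝔰_l orthogonal with invariant restrictions and W = ([W,W])^⊥. -/

import Mathlib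

open scoped RealInnerProductSpace

def bSpan {E : Type*} [NormedAddCommGroup E] [InnerProductSpace ℝ E]
    (b : E →ₗ[ℝ] E →ₗ[ℝ] E) (W U : Submodule ℝ E) : Submodule ℝ E :=
  Submodule.span ℝ {z | ∃ x ∈ W, ∃ y ∈ U, z = b x y}

theorem stmt10 {E : Type*} [NormedAddCommGroup E] [InnerProductSpace ℝ E]
    [FiniteDimensional ℝ E]
    (b : E →ₗ[ℝ] E →ₗ[ℝ] E)
    (hskew : ∀ X Y : E, b X Y = - b Y X)
    (hjacobi : ∀ X Y Z : E, b (b X Y) Z + b (b Y Z) X + b (b Z X) Y = 0)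
    (hinv : ∀ X Y Z : E, ⟪b X Y, Z⟫ = ⟪X, b Y Z⟫)
    {m : ℕ} (S : Fin m → Submodule ℝ E)
    (hSup : (⨆ l, S l) = ⊤)
    (horth : ∀ l l', l ≠ l' → ∀ x ∈ S l, ∀ y ∈ S l', ⟪x, y⟫ = 0)
    (hideal : ∀ l, ∀ x : E, ∀ y ∈ S l, b x y ∈ S l)
    (hsimple : ∀ l, bSpan b (S l) (S l) ≠ ⊥ ∧
      ∀ I : Submodule ℝ E, I ≤ S l → (∀ x : E, ∀ y ∈ I, b x y ∈ I) → I = ⊥ ∨ I = S l)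
    (W : Submodule ℝ E)
    (hLTS : ∀ x ∈ W, ∀ y ∈ W, ∀ z ∈ W, b (b x y) z ∈ W)
    (hsup : W ⊔ bSpan b W W = ⊤)
    (hmeet : W ⊓ bSpan b W W = ⊥)
    (hWperp : W = (bSpan b W W)ᗮ)
    (P : Fin m → E →ₗ[ℝ] E)
    (hP : ∀ l, P l = (S l).subtype ∘ₗ (S l).orthogonalProjection.toLinearMap)
    (hproj : ∀ l, Submodule.map (P l) W ⊓
        bSpan b (Submodule.map (P l) W) (Submodule.map (P l) W) = ⊥) :
    (∀ l, Submodule.map (P l) W ≤ S l ∧ Submodule.map (P l) W ≠ ⊥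
        ∧ Submodule.map (P l) W ≠ S l)
    ∧ (⨆ l, Submodule.map (P l) W) = W := by
  classical
  set H := bSpan b W W with hHdef
  -- S l is nonzero
  have hSne : ∀ l, S l ≠ ⊥ := by
    intro l hl
    apply (hsimple l).1
    rw [eq_bot_iff]
    refine Submodule.span_le.2 ?_
    rintro z ⟨x, hx, y, hy, rfl⟩
    rw [hl] at hx
    simp only [Submodule.mem_bot] at hx ⊢
    rw [hx]; simp
  -- projection basics
  have hP_mem : ∀ l (x : E), P l x ∈ S l := by
    intro l x; rw [hP l]; exact ((S l).orthogonalProjection x).2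
  have hP_id : ∀ l, ∀ x ∈ S l, P l x = x := by
    intro l x hx
    rw [hP l]
    have := Submodule.orthogonalProjection_mem_subspace_eq_self (K := S l) ⟨x, hx⟩
    simp only [LinearMap.coe_comp, Function.comp_apply, ContinuousLinearMap.coe_coe,
      Submodule.coe_subtype]
    rw [show ((⟨x, hx⟩ : S l) : E) = x from rfl] at this
    rw [this]
  have hP_zero : ∀ l j, l ≠ j → ∀ x ∈ S j, P l x = 0 := by
    intro l j hne x hx
    have hxo : x ∈ (S l)ᗮ := by
      intro u hu
      exact horth l j hne u hu x hx
    rw [hP l]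
    simp only [LinearMap.coe_comp, Function.comp_apply, ContinuousLinearMap.coe_coe,
      Submodule.coe_subtype]
    rw [Submodule.orthogonalProjection_mem_subspace_orthogonalComplement_eq_zero hxo]
    simp
  -- brackets between different ideals vanish
  have hbzero : ∀ l j, l ≠ j → ∀ x ∈ S l, ∀ y ∈ S j, b x y = 0 := by
    intro l j hne x hx y hy
    have h1 : b x y ∈ S j := hideal j x y hy
    have h2 : b x y ∈ S l := by
      rw [hskew]; exact neg_mem (hideal l y x hx)
    have := horth l j hne _ h2 _ h1
    exact inner_self_eq_zero.mp this
  -- sum of projections is the identity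
  have hsum : ∀ x : E, (∑ l, P l x) = x := by
    intro x
    have hx : x ∈ ⨆ l, S l := by rw [hSup]; trivial
    refine Submodule.iSup_induction (motive := fun x => (∑ l, P l x) = x) S hx ?_ ?_ ?_
    · intro j x hx
      rw [Finset.sum_eq_single j]
      · exact hP_id j x hx
      · intro i _ hij; exact hP_zero i j hij x hx
      · intro h; exact absurd (Finset.mem_univ j) h
    · simp
    · intro x y hx hy
      simp only [map_add]
      rw [Finset.sum_add_distrib, hx, hy]
  -- b x y = b (P l x) y when y ∈ S l
  have hbP : ∀ l (x : E), ∀ y ∈ S l, b x y = b (P l x) y := by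
    intro l x y hy
    have hx : x ∈ ⨆ l, S l := by rw [hSup]; trivial
    refine Submodule.iSup_induction (motive := fun x => b x y = b (P l x) y) S hx ?_ ?_ ?_
    · intro j x hx
      by_cases hjl : j = l
      · subst hjl; rw [hP_id j x hx]
      · rw [hbzero j l hjl x hx y hy, hP_zero l j (fun h => hjl h.symm) x hx]
        simp
    · simp
    · intro u v hu hv
      simp only [map_add, LinearMap.add_apply]
      rw [hu, hv]
  -- P l is a Lie algebra morphism
  have hPLie : ∀ l (x y : E), P l (b x y) = b (P l x) (P l y) := by
    intro l x y
    have hy : y ∈ ⨆ l, S l := by rw [hSup]; trivial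
    refine Submodule.iSup_induction (motive := fun y => P l (b x y) = b (P l x) (P l y)) S hy ?_ ?_ ?_
    · intro j y hy
      by_cases hjl : j = l
      · subst hjl
        rw [hP_id j _ (hideal j x y hy), hP_id j y hy, hbP j x y hy]
      · rw [hP_zero l j (fun h => hjl h.symm) _ (hideal j x y hy),
          hP_zero l j (fun h => hjl h.symm) y hy]
        simp
    · simp
    · intro u v hu hv
      simp only [map_add]
      rw [hu, hv]
  -- [S l, S l] = S l
  have hbSpanSS : ∀ l, bSpan b (S l) (S l) = S l := by
    intro l
    have hle : bSpan b (S l) (S l) ≤ S l := by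
      refine Submodule.span_le.2 ?_
      rintro z ⟨x, hx, y, hy, rfl⟩
      exact hideal l x y hy
    have hid : ∀ x : E, ∀ y ∈ bSpan b (S l) (S l), b x y ∈ bSpan b (S l) (S l) := by
      intro x y hy
      have : bSpan b (S l) (S l) ≤ (bSpan b (S l) (S l)).comap (b x) := by
        refine Submodule.span_le.2 ?_
        rintro z ⟨u, hu, v, hv, rfl⟩
        have hj := hjacobi x u v
        have he : b x (b u v) = b (b x u) v + b (b v x) u := by
          rw [hskew (b u v) x] at hj
          have hd : b x (b u v) - (b (b x u) v + b (b v x) u)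
              = -(b (b x u) v + -(b x (b u v)) + b (b v x) u) := by abel
          rw [hj, neg_zero] at hd
          exact sub_eq_zero.mp hd
        show b x (b u v) ∈ bSpan b (S l) (S l)
        rw [he]
        exact add_mem
          (Submodule.subset_span ⟨b x u, hideal l x u hu, v, hv, rfl⟩)
          (Submodule.subset_span ⟨b v x, by rw [hskew]; exact neg_mem (hideal l x v hv), u, hu, rfl⟩)
      exact this hy
    rcases (hsimple l).2 _ hle hid with h | h
    · exact absurd h (hsimple l).1
    · exact h
  -- any submodule is below the sup of its projections
  have hV_le_sup : ∀ V : Submodule ℝ E, V ≤ ⨆ l, Submodule.map (P l) V := by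
    intro V x hx
    rw [← hsum x]
    exact Submodule.sum_mem _ fun l _ =>
      Submodule.mem_iSup_of_mem l ⟨x, hx, rfl⟩
  have hPrange : ∀ l (V : Submodule ℝ E), Submodule.map (P l) V ≤ S l := by
    rintro l V z ⟨x, _, rfl⟩; exact hP_mem l x
  -- projection of an ideal is an ideal
  have hPmapIdeal : ∀ l (I : Submodule ℝ E), (∀ x : E, ∀ y ∈ I, b x y ∈ I) →
      ∀ x : E, ∀ y ∈ Submodule.map (P l) I, b x y ∈ Submodule.map (P l) I := by
    rintro l I hI x _ ⟨z, hz, rfl⟩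
    have : b x (P l z) = P l (b x z) := by
      rw [hPLie l x z, ← hbP l x (P l z) (hP_mem l z)]
    rw [this]
    exact ⟨b x z, hI x z hz, rfl⟩
  -- Lemma A : the projection of an ideal is contained in it
  have hLemmaA : ∀ l (I : Submodule ℝ E), (∀ x : E, ∀ y ∈ I, b x y ∈ I) →
      Submodule.map (P l) I ≤ I := by
    rintro l I hI _ ⟨y, hy, rfl⟩
    have hJideal : ∀ x : E, ∀ z ∈ I ⊓ S l, b x z ∈ I ⊓ S l := by
      rintro x z ⟨h1, h2⟩
      exact ⟨hI x z h1, hideal l x z h2⟩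
    rcases (hsimple l).2 _ inf_le_right hJideal with hJ | hJ
    · -- J = ⊥ : P l y is central in S l, hence zero
      have hstep : ∀ s ∈ S l, b (P l y) s = 0 := by
        intro s hs
        have h1 : b y s ∈ I := by
          rw [hskew]; exact neg_mem (hI s y hy)
        have h2 : b y s ∈ S l := hideal l y s hs
        have : b y s ∈ I ⊓ S l := ⟨h1, h2⟩
        rw [hJ, Submodule.mem_bot] at this
        rw [← hbP l y s hs, this]
      -- the center of S l
      set Z : Submodule ℝ E := S l ⊓ (⨅ s : S l, LinearMap.ker (b.flip (s : E))) with hZdef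
      have hZmem : ∀ z : E, z ∈ Z ↔ z ∈ S l ∧ ∀ s ∈ S l, b z s = 0 := by
        intro z
        simp only [hZdef, Submodule.mem_inf, Submodule.mem_iInf, LinearMap.mem_ker,
          LinearMap.flip_apply, Subtype.forall]
      have hZideal : ∀ x : E, ∀ z ∈ Z, b x z ∈ Z := by
        intro x z hz
        rw [hZmem] at hz
        rw [hZmem]
        refine ⟨hideal l x z hz.1, ?_⟩
        intro s hs
        have hj := hjacobi x z s
        have h1 : b (b z s) x = 0 := by rw [hz.2 s hs]; simp
        have h2 : b (b s x) z = 0 := by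
          have h3 : b z (b x s) = 0 := hz.2 (b x s) (hideal l x s hs)
          calc b (b s x) z = -(b z (b s x)) := hskew _ _
            _ = -(b z (-(b x s))) := by rw [hskew s x]
            _ = b z (b x s) := by rw [map_neg, neg_neg]
            _ = 0 := h3
        rw [h1, h2, add_zero, add_zero] at hj
        exact hj
      rcases (hsimple l).2 Z inf_le_left hZideal with hZ | hZ
      · have : P l y ∈ Z := (hZmem _).2 ⟨hP_mem l y, hstep⟩
        rw [hZ, Submodule.mem_bot] at this
        rw [this]; exact zero_mem I
      · exfalso
        apply (hsimple l).1
        rw [eq_bot_iff]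
        refine Submodule.span_le.2 ?_
        rintro z ⟨u, hu, v, hv, rfl⟩
        have hu' : u ∈ Z := hZ ▸ hu
        rw [hZmem] at hu'
        simp only [SetLike.mem_coe, Submodule.mem_bot]
        exact hu'.2 v hv
    · have : P l y ∈ S l := hP_mem l y
      rw [← hJ] at this
      exact this.1
  -- W_l ≠ S_l
  have hWlS : ∀ l, Submodule.map (P l) W ≤ S l := fun l => hPrange l W
  have hWlne : ∀ l, Submodule.map (P l) W ≠ S l := by
    intro l h
    have := hproj l
    rw [h, hbSpanSS l, inf_idem] at this
    exact hSne l this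
  -- W_l ≠ ⊥
  have hWlbot : ∀ l, Submodule.map (P l) W ≠ ⊥ := by
    intro l h
    have hWker : W ≤ LinearMap.ker (P l) := by
      intro w hw
      have : P l w ∈ Submodule.map (P l) W := ⟨w, hw, rfl⟩
      rw [h, Submodule.mem_bot] at this
      exact this
    have hHker : H ≤ LinearMap.ker (P l) := by
      refine Submodule.span_le.2 ?_
      rintro z ⟨u, hu, v, hv, rfl⟩
      simp only [SetLike.mem_coe, LinearMap.mem_ker]
      rw [hPLie l u v, hWker hu, hWker hv]
      simp
    have htop : (⊤ : Submodule ℝ E) ≤ LinearMap.ker (P l) := by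
      rw [← hsup]; exact sup_le hWker hHker
    obtain ⟨s, hs, hsne⟩ := Submodule.exists_mem_ne_zero_of_ne_bot (hSne l)
    have : P l s = 0 := htop trivial
    rw [hP_id l s hs] at this
    exact hsne this
  -- the involution θ : +1 on H, -1 on W
  have hcompl : IsCompl W H := ⟨disjoint_iff.2 hmeet, codisjoint_iff.2 hsup⟩
  set aW : E →ₗ[ℝ] E := W.subtype ∘ₗ (W.projectionOnto H hcompl) with haWdef
  set aH : E →ₗ[ℝ] E := H.subtype ∘ₗ (H.projectionOnto W hcompl.symm) with haHdef
  set θ : E →ₗ[ℝ] E := aH - aW with hθdef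
  have haWmem : ∀ x : E, aW x ∈ W := fun x => (W.projectionOnto H hcompl x).2
  have haHmem : ∀ x : E, aH x ∈ H := fun x => (H.projectionOnto W hcompl.symm x).2
  have hadd : ∀ x : E, aW x + aH x = x := fun x =>
    Submodule.projection_add_projection_eq_self hcompl x
  have hθx : ∀ x : E, θ x = aH x - aW x := fun x => rfl
  have hθW : ∀ w ∈ W, θ w = -w := by
    intro w hw
    have h1 : aW w = w := by
      simp only [haWdef, LinearMap.coe_comp, Function.comp_apply, Submodule.coe_subtype]
      rw [Submodule.projectionOnto_apply_left hcompl ⟨w, hw⟩]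
    have h2 : aH w = 0 := by
      simp only [haHdef, LinearMap.coe_comp, Function.comp_apply, Submodule.coe_subtype]
      rw [Submodule.projectionOnto_apply_of_mem_right hcompl.symm hw]
      simp
    rw [hθx, h1, h2]; abel
  have hθH : ∀ h ∈ H, θ h = h := by
    intro h hh
    have h1 : aW h = 0 := by
      simp only [haWdef, LinearMap.coe_comp, Function.comp_apply, Submodule.coe_subtype]
      rw [Submodule.projectionOnto_apply_of_mem_right hcompl hh]
      simp
    have h2 : aH h = h := by
      simp only [haHdef, LinearMap.coe_comp, Function.comp_apply, Submodule.coe_subtype]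
      rw [Submodule.projectionOnto_apply_left hcompl.symm ⟨h, hh⟩]
    rw [hθx, h1, h2]; abel
  have hθθ : ∀ x : E, θ (θ x) = x := by
    intro x
    rw [hθx x, map_sub, hθH _ (haHmem x), hθW _ (haWmem x), sub_neg_eq_add]
    rw [add_comm]
    exact hadd x
  have hθmem : ∀ x : E, θ x = -x → x ∈ W := by
    intro x hx
    rw [hθx x] at hx
    have h2 : aH x - aW x = -(aW x + aH x) := by rw [hadd, hx]
    have h3 : (2 : ℝ) • aH x = 0 := by
      have : aH x - aW x + (aW x + aH x) = 0 := by rw [h2]; abel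
      have h4 : aH x + aH x = 0 := by
        calc aH x + aH x = aH x - aW x + (aW x + aH x) := by abel
          _ = 0 := this
      rw [two_smul]; exact h4
    have h5 : aH x = 0 := by
      have := smul_eq_zero.mp h3
      rcases this with h | h
      · norm_num at h
      · exact h
    rw [← hadd x, h5, add_zero]
    exact haWmem x
  -- bracket relations between W and H
  have hbWW : ∀ a ∈ W, ∀ a' ∈ W, b a a' ∈ H := fun a ha a' ha' =>
    Submodule.subset_span ⟨a, ha, a', ha', rfl⟩
  have hbWH : ∀ a ∈ W, ∀ h ∈ H, b a h ∈ W := by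
    intro a ha
    have : H ≤ W.comap (b a) := by
      refine Submodule.span_le.2 ?_
      rintro z ⟨x, hx, y, hy, rfl⟩
      show b a (b x y) ∈ W
      rw [hskew]
      exact neg_mem (hLTS x hx y hy a ha)
    exact fun h hh => this hh
  have hbHW : ∀ h ∈ H, ∀ a ∈ W, b h a ∈ W := by
    intro h hh a ha
    rw [hskew]
    exact neg_mem (hbWH a ha h hh)
  have hbHH : ∀ h ∈ H, ∀ h' ∈ H, b h h' ∈ H := by
    have step1 : ∀ u ∈ W, ∀ v ∈ W, ∀ h ∈ H, b h (b u v) ∈ H := by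
      intro u hu v hv
      have : H ≤ H.comap (b.flip (b u v)) := by
        refine Submodule.span_le.2 ?_
        rintro z ⟨x, hx, y, hy, rfl⟩
        show b (b x y) (b u v) ∈ H
        have hj := hjacobi x y (b u v)
        have he : b (b x y) (b u v)
            = -(b (b y (b u v)) x + b (b (b u v) x) y) := by
          have hd : b (b x y) (b u v) - (-(b (b y (b u v)) x + b (b (b u v) x) y))
              = b (b x y) (b u v) + b (b y (b u v)) x + b (b (b u v) x) y := by abel
          rw [hj] at hd
          exact sub_eq_zero.mp hd
        rw [he]
        refine neg_mem (add_mem ?_ ?_)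
        · exact hbWW _ (hbWH y hy _ (hbWW u hu v hv)) x hx
        · exact hbWW _ (hbHW _ (hbWW u hu v hv) x hx) y hy
      intro h hh
      exact this hh
    intro h hh
    have : H ≤ H.comap (b h) := by
      refine Submodule.span_le.2 ?_
      rintro z ⟨u, hu, v, hv, rfl⟩
      exact step1 u hu v hv h hh
    exact fun h' hh' => this hh'
  -- θ is a Lie algebra automorphism
  have hθb : ∀ x y : E, θ (b x y) = b (θ x) (θ y) := by
    intro x y
    have hxd : x = aW x + aH x := (hadd x).symm
    have hyd : y = aW y + aH y := (hadd y).symm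
    have e1 : θ (b (aW x) (aW y)) = b (aW x) (aW y) :=
      hθH _ (hbWW _ (haWmem x) _ (haWmem y))
    have e2 : θ (b (aW x) (aH y)) = -(b (aW x) (aH y)) :=
      hθW _ (hbWH _ (haWmem x) _ (haHmem y))
    have e3 : θ (b (aH x) (aW y)) = -(b (aH x) (aW y)) :=
      hθW _ (hbHW _ (haHmem x) _ (haWmem y))
    have e4 : θ (b (aH x) (aH y)) = b (aH x) (aH y) :=
      hθH _ (hbHH _ (haHmem x) _ (haHmem y))
    calc θ (b x y)
        = θ (b (aW x) (aW y)) + θ (b (aW x) (aH y)) + θ (b (aH x) (aW y))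
            + θ (b (aH x) (aH y)) := by
          conv_lhs => rw [hxd, hyd]
          simp only [map_add, LinearMap.add_apply]
          abel
      _ = b (aW x) (aW y) - b (aW x) (aH y) - b (aH x) (aW y)
            + b (aH x) (aH y) := by rw [e1, e2, e3, e4]; abel
      _ = b (θ x) (θ y) := by
          rw [hθx x, hθx y]
          simp only [map_sub, LinearMap.sub_apply]
          abel
  -- θ² = id on submodules
  have hmapθθ : ∀ V : Submodule ℝ E, Submodule.map θ (Submodule.map θ V) = V := by
    intro V
    rw [← Submodule.map_comp]
    rw [show (θ.comp θ : E →ₗ[ℝ] E) = LinearMap.id from LinearMap.ext hθθ]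
    exact Submodule.map_id V
  -- θ (S l) is a nonzero ideal
  have hθidealS : ∀ l, ∀ x : E, ∀ y ∈ Submodule.map θ (S l), b x y ∈ Submodule.map θ (S l) := by
    rintro l x _ ⟨s, hs, rfl⟩
    refine ⟨b (θ x) s, hideal l (θ x) s hs, ?_⟩
    rw [hθb, hθθ]
  have hθbotS : ∀ l, Submodule.map θ (S l) ≠ ⊥ := by
    intro l h
    apply hSne l
    rw [← hmapθθ (S l), h, Submodule.map_bot]
  -- θ (S l) = S l
  have hθS : ∀ l, Submodule.map θ (S l) = S l := by
    intro l
    -- some projection of θ(S l) is nonzero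
    obtain ⟨j, hj⟩ : ∃ j, Submodule.map (P j) (Submodule.map θ (S l)) ≠ ⊥ := by
      by_contra hc
      push_neg at hc
      apply hθbotS l
      rw [eq_bot_iff]
      refine le_trans (hV_le_sup _) ?_
      exact iSup_le fun j => le_of_eq (hc j)
    -- that projection equals S j
    have hKideal := hPmapIdeal j _ (hθidealS l)
    have hK : Submodule.map (P j) (Submodule.map θ (S l)) = S j := by
      rcases (hsimple j).2 _ (hPrange j _) hKideal with h | h
      · exact absurd h hj
      · exact h
    -- S j ≤ θ (S l), hence θ (S j) = S l, hence θ (S l) = S j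
    have hSj_le : S j ≤ Submodule.map θ (S l) := by
      rw [← hK]; exact hLemmaA j _ (hθidealS l)
    have hθSj_le : Submodule.map θ (S j) ≤ S l := by
      refine le_trans (Submodule.map_mono hSj_le) ?_
      rw [hmapθθ]
    have hθSjideal : ∀ x : E, ∀ y ∈ Submodule.map θ (S j), b x y ∈ Submodule.map θ (S j) := by
      rintro x _ ⟨s, hs, rfl⟩
      refine ⟨b (θ x) s, hideal j (θ x) s hs, ?_⟩
      rw [hθb, hθθ]
    have hθSj : Submodule.map θ (S j) = S l := by
      rcases (hsimple l).2 _ hθSj_le hθSjideal with h | h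
      · exact absurd h (hθbotS j)
      · exact h
    have hθSl : Submodule.map θ (S l) = S j := by
      rw [← hθSj, hmapθθ]
    by_cases hjl : j = l
    · rw [hθSl, hjl]
    · -- if j ≠ l then P l W = S l, contradiction
      exfalso
      apply hWlne l
      refine le_antisymm (hWlS l) ?_
      intro x hx
      have hwW : x - θ x ∈ W := by
        apply hθmem
        rw [map_sub, hθθ]
        abel
      have hPx : P l (x - θ x) = x := by
        have h1 : θ x ∈ S j := by
          rw [← hθSl]; exact ⟨x, hx, rfl⟩
        rw [map_sub, hP_id l x hx, hP_zero l j (fun h => hjl h.symm) _ h1, sub_zero]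
      exact ⟨x - θ x, hwW, hPx⟩
  -- θ commutes with P l
  have hPθ : ∀ l (x : E), P l (θ x) = θ (P l x) := by
    intro l x
    have hx : x ∈ ⨆ l, S l := by rw [hSup]; trivial
    refine Submodule.iSup_induction (motive := fun x => P l (θ x) = θ (P l x)) S hx ?_ ?_ ?_
    · intro j x hx
      have hθxS : θ x ∈ S j := by rw [← hθS j]; exact ⟨x, hx, rfl⟩
      by_cases hjl : j = l
      · subst hjl
        rw [hP_id j _ hθxS, hP_id j x hx]
      · rw [hP_zero l j (fun h => hjl h.symm) _ hθxS,
          hP_zero l j (fun h => hjl h.symm) x hx, map_zero]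
    · simp
    · intro u v hu hv
      simp only [map_add]
      rw [hu, hv]
  -- P l W ≤ W
  have hWlW : ∀ l, Submodule.map (P l) W ≤ W := by
    rintro l _ ⟨w, hw, rfl⟩
    apply hθmem
    rw [← hPθ l w, hθW w hw, map_neg]
  exact ⟨fun l => ⟨hWlS l, hWlbot l, hWlne l⟩,
    le_antisymm (iSup_le hWlW) (hV_le_sup W)⟩
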